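/- arXiv:2210.07048 — 6 statements merged into one kernel-verified Lean document; each statement's English description precedes it below -/
import Mathlib

section
/- Let x_0 < x_1 < ... < x_k be real numbers and Q a real polynomial such that Q(x_i) ≥ 0 for even i and Q(x_i) ≤ 0 for odd i (or vice versa with signs reversed). Then Q has at least k roots, counted with multiplicity, in the interval [x_0, x_k]. -/
open Polynomial

private lemma factor_facts (Q : Polynomial ℝ) (hQ : Q ≠ 0) (r : ℝ) (hroot : Q.IsRoot r) :
    Q /ₘ (X - C r) ≠ 0 ∧ (Q /ₘ (X - C r)).natDegree + 1 = Q.natDegree ∧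
    Q.roots = r ::ₘ (Q /ₘ (X - C r)).roots ∧
    ∀ y : ℝ, Q.eval y = (y - r) * (Q /ₘ (X - C r)).eval y := by
  have hfac : (X - C r) * (Q /ₘ (X - C r)) = Q :=
    (mul_divByMonic_eq_iff_isRoot).mpr hroot
  have hP0 : Q /ₘ (X - C r) ≠ 0 := by
    intro h
    rw [← hfac, h, mul_zero] at hQ
    exact hQ rfl
  have hdeg1 : 1 ≤ Q.natDegree := by
    rcases Nat.eq_zero_or_pos Q.natDegree with h | h
    · obtain ⟨a, rfl⟩ := natDegree_eq_zero.mp h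
      simp only [IsRoot, eval_C] at hroot
      subst hroot
      simp at hQ
    · omega
  have hdeg : (Q /ₘ (X - C r)).natDegree + 1 = Q.natDegree := by
    rw [natDegree_divByMonic Q (monic_X_sub_C r), natDegree_X_sub_C]
    omega
  refine ⟨hP0, hdeg, ?_, ?_⟩
  · conv_lhs => rw [← hfac]
    rw [roots_mul (by rw [hfac]; exact hQ), roots_X_sub_C, Multiset.singleton_add]
  · intro y
    conv_lhs => rw [← hfac]
    rw [eval_mul, eval_sub, eval_X, eval_C]

private lemma neg_one_pow_succ' (n : ℕ) : (-1 : ℝ) ^ (n + 1) = -((-1 : ℝ) ^ n) := by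
  rw [pow_succ]; ring

private lemma aux : ∀ (n : ℕ) (Q : Polynomial ℝ), Q ≠ 0 → Q.natDegree < n →
    ∀ (k b : ℕ) (x : Fin (k + 1) → ℝ), StrictMono x →
    (∀ i : Fin (k + 1), 0 ≤ (-1 : ℝ) ^ ((i : ℕ) + b) * Q.eval (x i)) →
    k ≤ Multiset.card (Q.roots.filter fun r => r ∈ Set.Icc (x 0) (x (Fin.last k))) := by
  intro n
  induction n with
  | zero => intro Q _ h; omega
  | succ n ih =>
    intro Q hQ hdeg k b x hx hs
    match k with
    | 0 => simp
    | m + 1 =>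
      have h01 : x 0 < x 1 := hx (by simp [Fin.lt_def])
      have h1le : x 1 ≤ x (Fin.last (m + 1)) :=
        hx.monotone (by simp [Fin.le_def])
      have h0 := hs 0
      have h1 := hs 1
      simp only [Fin.val_zero, Fin.val_one, Nat.zero_add] at h0 h1
      -- main helper
      have main : ∀ r : ℝ, Q.IsRoot r → r ∈ Set.Icc (x 0) (x 1) →
          ∀ y : Fin (m + 1) → ℝ, StrictMono y → x 0 ≤ y 0 →
          y (Fin.last m) ≤ x (Fin.last (m + 1)) →
          (∀ j : Fin (m + 1), 0 ≤ (-1 : ℝ) ^ ((j : ℕ) + (b + 1)) *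
            (Q /ₘ (X - C r)).eval (y j)) →
          m + 1 ≤ Multiset.card (Q.roots.filter
            fun ρ => ρ ∈ Set.Icc (x 0) (x (Fin.last (m + 1)))) := by
        intro r hroot hrIcc y hy hy0 hyl hys
        obtain ⟨hP0, hPdeg, hroots, -⟩ := factor_facts Q hQ r hroot
        have hPdeg' : (Q /ₘ (X - C r)).natDegree < n := by omega
        have hm := ih (Q /ₘ (X - C r)) hP0 hPdeg' m (b + 1) y hy hys
        have hsub : m ≤ Multiset.card ((Q /ₘ (X - C r)).roots.filter
            fun ρ => ρ ∈ Set.Icc (x 0) (x (Fin.last (m + 1)))) := by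
          refine hm.trans (Multiset.card_le_card
            (Multiset.monotone_filter_right _ ?_))
          intro ρ hρ
          exact ⟨hy0.trans hρ.1, hρ.2.trans hyl⟩
        have hrBig : r ∈ Set.Icc (x 0) (x (Fin.last (m + 1))) :=
          ⟨hrIcc.1, hrIcc.2.trans h1le⟩
        rw [hroots, Multiset.filter_cons, if_pos hrBig, Multiset.card_add,
          Multiset.card_singleton]
        omega
      by_cases hx1 : Q.eval (x 1) = 0
      · -- case B : x 1 is a root
        have hroot : Q.IsRoot (x 1) := hx1
        obtain ⟨-, -, -, heval⟩ := factor_facts Q hQ (x 1) hroot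
        have hg : StrictMono (fun j : Fin (m + 1) =>
            (Fin.cases 0 (fun i => i.succ.succ) j : Fin (m + 2))) := by
          intro a b' hab
          rcases Fin.eq_zero_or_eq_succ b' with rfl | ⟨i, rfl⟩
          · exact absurd hab (Fin.not_lt_zero a)
          rcases Fin.eq_zero_or_eq_succ a with rfl | ⟨i', rfl⟩
          · simp only [Fin.cases_zero, Fin.cases_succ]
            exact Fin.succ_pos _
          · simp only [Fin.cases_succ]
            exact Fin.succ_lt_succ_iff.mpr (Fin.succ_lt_succ_iff.mpr (Fin.succ_lt_succ_iff.mp hab))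
        refine main (x 1) hroot ⟨h01.le, le_refl _⟩
          (fun j => x (Fin.cases 0 (fun i => i.succ.succ) j)) (hx.comp hg) (by simp)
          (hx.monotone (Fin.le_last _)) ?_
        intro j
        rcases Fin.eq_zero_or_eq_succ j with rfl | ⟨i, rfl⟩
        · simp only [Fin.cases_zero, Fin.val_zero, Nat.zero_add]
          have hd : (0 : ℝ) < x 1 - x 0 := by linarith
          rw [heval (x 0)] at h0
          rw [neg_one_pow_succ']
          refine (mul_nonneg_iff_of_pos_right hd).mp ?_
          nlinarith [h0]
        · simp only [Fin.cases_succ, Fin.val_succ]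
          have hj1 : (1 : Fin (m + 2)) < i.succ.succ := by
            simp [Fin.lt_def]
          have hd : (0 : ℝ) < x i.succ.succ - x 1 := sub_pos.mpr (hx hj1)
          have hjs := hs i.succ.succ
          rw [Fin.val_succ, Fin.val_succ, heval (x i.succ.succ)] at hjs
          have hexp : ((i : ℕ) + 1 + 1 + b) = (i : ℕ) + 1 + (b + 1) := by omega
          rw [hexp] at hjs
          refine (mul_nonneg_iff_of_pos_right hd).mp ?_
          nlinarith [hjs]
      · -- case A : root strictly below x 1
        have hc : Continuous fun y : ℝ => (-1 : ℝ) ^ b * Q.eval y :=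
          continuous_const.mul (Polynomial.continuous Q)
        have h1' : (-1 : ℝ) ^ b * Q.eval (x 1) ≤ 0 := by
          have e : 1 + b = b + 1 := by omega
          rw [e, neg_one_pow_succ'] at h1
          linarith
        have h0' : 0 ≤ (-1 : ℝ) ^ b * Q.eval (x 0) := h0
        obtain ⟨r, hrIcc, hr0⟩ := intermediate_value_Icc' h01.le hc.continuousOn
          (Set.mem_Icc.mpr ⟨h1', h0'⟩)
        have hroot : Q.IsRoot r := by
          have hne : ((-1 : ℝ) ^ b) ≠ 0 := pow_ne_zero _ (by norm_num)
          have := mul_eq_zero.mp hr0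
          tauto
        have hrlt : r < x 1 := lt_of_le_of_ne hrIcc.2 (by
          intro h; exact hx1 (h ▸ hroot))
        obtain ⟨-, -, -, heval⟩ := factor_facts Q hQ r hroot
        refine main r hroot hrIcc (x ∘ Fin.succ) (hx.comp Fin.strictMono_succ)
          (hx.monotone (Fin.zero_le _)) (by rw [Function.comp_apply, Fin.succ_last]) ?_
        intro j
        simp only [Function.comp_apply]
        have hj1 : (1 : Fin (m + 2)) ≤ j.succ := by simp [Fin.le_def]
        have hd : (0 : ℝ) < x j.succ - r :=
          sub_pos.mpr (hrlt.trans_le (hx.monotone hj1))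
        have hjs := hs j.succ
        rw [Fin.val_succ, heval (x j.succ)] at hjs
        have hexp : ((j : ℕ) + 1 + b) = (j : ℕ) + (b + 1) := by omega
        rw [hexp] at hjs
        refine (mul_nonneg_iff_of_pos_right hd).mp ?_
        nlinarith [hjs]

theorem stmt_0 (k : ℕ) (x : Fin (k + 1) → ℝ) (hx : StrictMono x)
    (Q : Polynomial ℝ)
    (hsign : (∀ i : Fin (k + 1), (Even (i : ℕ) → 0 ≤ Q.eval (x i)) ∧
                (Odd (i : ℕ) → Q.eval (x i) ≤ 0)) ∨
             (∀ i : Fin (k + 1), (Even (i : ℕ) → Q.eval (x i) ≤ 0) ∧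
                (Odd (i : ℕ) → 0 ≤ Q.eval (x i)))) :
    Q = 0 ∨ (k : ℕ) ≤
      Multiset.card (Q.roots.filter fun r => r ∈ Set.Icc (x 0) (x (Fin.last k))) := by
  by_cases hQ : Q = 0
  · exact Or.inl hQ
  right
  have H := aux (Q.natDegree + 1) Q hQ (lt_add_one _) k
  rcases hsign with h | h
  · refine H 0 x hx fun i => ?_
    rcases Nat.even_or_odd (i : ℕ) with he | ho
    · rw [Nat.add_zero, he.neg_one_pow, one_mul]
      exact (h i).1 he
    · rw [Nat.add_zero, ho.neg_one_pow]
      have := (h i).2 ho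
      linarith
  · refine H 1 x hx fun i => ?_
    rcases Nat.even_or_odd (i : ℕ) with he | ho
    · rw [he.add_one.neg_one_pow]
      have := (h i).1 he
      linarith
    · rw [ho.add_one.neg_one_pow, one_mul]
      exact (h i).2 ho
end

section
/- Let m ≥ 2 and let P be a real polynomial of degree at most m with P ≠ T_m, where T_m is the m-th Chebyshev polynomial of the first kind. Suppose P − T_m has a zero of multiplicity at least 2 at some ξ ∈ (−1,1) with ξ ≠ cos(iπ/m) for every i = 1, ..., m−1. Then there exists x ∈ (−1, cos(π/m)) with |P(x)| > 1. -/
open Polynomial Real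

lemma chebT_natDegree_le (n : ℕ) : (Polynomial.Chebyshev.T ℝ (n : ℤ)).natDegree ≤ n := by
  induction n using Nat.strong_induction_on with
  | _ n ih =>
    match n with
    | 0 => simp [Polynomial.Chebyshev.T_zero]
    | 1 => simp [Polynomial.Chebyshev.T_one]
    | (k+2) =>
      have h1 := ih (k+1) (by omega)
      have h0 := ih k (by omega)
      rw [show ((k+2 : ℕ) : ℤ) = (k:ℤ) + 2 by push_cast; ring,
        Polynomial.Chebyshev.T_add_two]
      refine le_trans (Polynomial.natDegree_sub_le _ _) (max_le ?_ ?_)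
      · refine le_trans (Polynomial.natDegree_mul_le) ?_
        have hx : (2 * X : ℝ[X]).natDegree ≤ 1 :=
          le_trans Polynomial.natDegree_mul_le (by simp)
        have e1 : ((k:ℤ)+1) = ((k+1:ℕ):ℤ) := by push_cast; ring
        rw [e1]; omega
      · omega

lemma count_lemma (n : ℕ) (z : ℕ → ℝ) (R : Multiset ℝ)
    (h1 : ∀ i, 1 ≤ i → i ≤ n → z i ∈ R)
    (h2 : ∀ i, 1 ≤ i → i + 1 ≤ n → z i = z (i+1) → 2 ≤ R.count (z i))
    (h3 : ∀ i j, 1 ≤ i → i + 2 ≤ j → j ≤ n → z j < z i) :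
    n ≤ Multiset.card R := by
  classical
  set I : Finset ℕ := Finset.Icc 1 n with hI
  have hcard : I.card = n := by simp [hI]
  have key : ∀ a ∈ I.image z, (I.filter (fun i => z i = a)).card ≤ R.count a := by
    intro a ha
    set F := I.filter (fun i => z i = a) with hF
    have hFne : F.Nonempty := by
      obtain ⟨i, hi, hzi⟩ := Finset.mem_image.mp ha
      exact ⟨i, Finset.mem_filter.mpr ⟨hi, hzi⟩⟩
    set lo := F.min' hFne with hlo
    set hi' := F.max' hFne with hhi
    have hloF : lo ∈ F := F.min'_mem hFne
    have hhiF : hi' ∈ F := F.max'_mem hFne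
    have hloI : lo ∈ I := (Finset.mem_filter.mp hloF).1
    have hhiI : hi' ∈ I := (Finset.mem_filter.mp hhiF).1
    have hzlo : z lo = a := (Finset.mem_filter.mp hloF).2
    have hzhi : z hi' = a := (Finset.mem_filter.mp hhiF).2
    have hlole : lo ≤ hi' := F.min'_le hi' hhiF
    have hlo1 : 1 ≤ lo := (Finset.mem_Icc.mp hloI).1
    have hhin : hi' ≤ n := (Finset.mem_Icc.mp hhiI).2
    have hsub : F ⊆ Finset.Icc lo hi' := by
      intro k hk
      exact Finset.mem_Icc.mpr ⟨F.min'_le k hk, F.le_max' k hk⟩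
    have hFcard : F.card ≤ hi' - lo + 1 := by
      calc F.card ≤ (Finset.Icc lo hi').card := Finset.card_le_card hsub
        _ = hi' - lo + 1 := by rw [Nat.card_Icc]; omega
    rcases Nat.lt_or_ge hi' (lo + 2) with hcase | hcase
    · rcases Nat.lt_or_ge hi' (lo + 1) with hcase1 | hcase1
      · have hc1 : 1 ≤ R.count a := by
          rw [Multiset.one_le_count_iff_mem]
          exact hzlo ▸ h1 lo hlo1 (le_trans hlole hhin)
        omega
      · have heq : hi' = lo + 1 := by omega
        have hle2 := h2 lo hlo1 (by omega) (by rw [hzlo, ← heq, hzhi])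
        rw [hzlo] at hle2
        omega
    · exfalso
      have hlt := h3 lo hi' hlo1 hcase hhin
      rw [hzlo, hzhi] at hlt
      exact lt_irrefl a hlt
  have h4 : n = ∑ a ∈ I.image z, (I.filter (fun i => z i = a)).card := by
    rw [← hcard]; exact Finset.card_eq_sum_card_image z I
  have h5 : ∑ a ∈ I.image z, (I.filter (fun i => z i = a)).card
      ≤ ∑ a ∈ I.image z, R.count a := Finset.sum_le_sum key
  have h6 : (I.image z) ⊆ R.toFinset := by
    intro a ha
    obtain ⟨i, hi, hzi⟩ := Finset.mem_image.mp ha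
    rw [Multiset.mem_toFinset, ← hzi]
    exact h1 i (Finset.mem_Icc.mp hi).1 (Finset.mem_Icc.mp hi).2
  have h7 : ∑ a ∈ I.image z, R.count a ≤ ∑ a ∈ R.toFinset, R.count a :=
    Finset.sum_le_sum_of_subset h6
  rw [Multiset.toFinset_sum_count_eq] at h7
  omega

theorem stmt_1 (m : ℕ) (hm : 2 ≤ m) (P : Polynomial ℝ)
    (hdeg : P.degree ≤ m) (hne : P ≠ Polynomial.Chebyshev.T ℝ m)
    (ξ : ℝ) (hξ : ξ ∈ Set.Ioo (-1 : ℝ) 1)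
    (hmult : 2 ≤ (P - Polynomial.Chebyshev.T ℝ m).rootMultiplicity ξ)
    (hext : ∀ i : ℕ, 1 ≤ i → i ≤ m - 1 → ξ ≠ Real.cos (i * π / m)) :
    ∃ x ∈ Set.Ioo (-1 : ℝ) (Real.cos (π / m)), 1 < |P.eval x| := by
  by_contra hcon
  push_neg at hcon
  have hm0 : (m:ℝ) ≠ 0 := Nat.cast_ne_zero.mpr (by omega)
  have hmpos : (0:ℝ) < m := Nat.cast_pos.mpr (by omega)
  have hπ := Real.pi_pos
  set c : ℕ → ℝ := fun i => Real.cos (i * π / m) with hcdef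
  have hargmem : ∀ i : ℕ, i ≤ m → ((i:ℝ) * π / m : ℝ) ∈ Set.Icc 0 π := by
    intro i hi
    constructor
    · positivity
    · rw [div_le_iff₀ hmpos]
      have : (i:ℝ) ≤ m := Nat.cast_le.mpr hi
      nlinarith
  have hanti : ∀ i j : ℕ, i < j → j ≤ m → c j < c i := by
    intro i j hij hj
    apply Real.strictAntiOn_cos (hargmem i (by omega)) (hargmem j hj)
    have hij' : (i:ℝ) < j := by exact_mod_cast hij
    gcongr
  have hcm : c m = -1 := by
    simp only [hcdef]
    rw [mul_comm, mul_div_assoc, div_self hm0, mul_one, Real.cos_pi]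
  have hc1 : c 1 = Real.cos (π / m) := by
    simp only [hcdef]; norm_num
  have hc1lt : (-1:ℝ) < c 1 := by
    have := hanti 1 m (by omega) le_rfl
    rwa [hcm] at this
  have hIoo : ∀ x ∈ Set.Ioo (-1:ℝ) (c 1), |P.eval x| ≤ 1 := by
    intro x hx
    apply hcon
    rwa [← hc1]
  have hIcc : ∀ x ∈ Set.Icc (-1:ℝ) (c 1), |P.eval x| ≤ 1 := by
    have hcl : IsClosed {x : ℝ | |P.eval x| ≤ 1} :=
      isClosed_le (Continuous.abs (P.continuous)) continuous_const
    intro x hx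
    have hsub : Set.Icc (-1:ℝ) (c 1) ⊆ {x | |P.eval x| ≤ 1} := by
      rw [← closure_Ioo (ne_of_lt hc1lt)]
      exact closure_minimal (fun y hy => hIoo y hy) hcl
    exact hsub hx
  set Q := P - Polynomial.Chebyshev.T ℝ (m:ℤ) with hQdef
  have hQne : Q ≠ 0 := sub_ne_zero.mpr hne
  have hTval : ∀ i : ℕ, (Polynomial.Chebyshev.T ℝ (m:ℤ)).eval (c i) = (-1)^i := by
    intro i
    have h := Polynomial.Chebyshev.T_real_cos ((i:ℝ)*π/m) (m:ℤ)
    rw [show (((m:ℤ):ℝ)) * ((i:ℝ)*π/m) = (i:ℝ) * π by push_cast; field_simp] at h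
    have h2 := Real.cos_nat_mul_pi_sub 0 i
    simp only [sub_zero, Real.cos_zero, mul_one] at h2
    simp only [hcdef]
    rw [h, h2]
  have hT'0 : ∀ k : ℕ, 1 ≤ k → k ≤ m - 1 →
      (derivative (Polynomial.Chebyshev.T ℝ (m:ℤ))).eval (c k) = 0 := by
    intro k hk1 hk2
    have hkpos : (0:ℝ) < k := Nat.cast_pos.mpr (by omega)
    have hθ1 : 0 < ((k:ℝ)*π/m : ℝ) := by positivity
    have hθ2 : ((k:ℝ)*π/m : ℝ) < π := by
      rw [div_lt_iff₀ hmpos]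
      have : (k:ℝ) < m := Nat.cast_lt.mpr (by omega)
      nlinarith
    have hsin : 0 < Real.sin ((k:ℝ)*π/m) := Real.sin_pos_of_pos_of_lt_pi hθ1 hθ2
    have hU := Polynomial.Chebyshev.U_real_cos ((k:ℝ)*π/m) ((m:ℤ) - 1)
    push_cast at hU
    rw [show ((m:ℝ) - 1 + 1) = (m:ℝ) by ring] at hU
    rw [show (m:ℝ) * ((k:ℝ)*π/(m:ℝ)) = (k:ℝ)*π by field_simp] at hU
    rw [Real.sin_nat_mul_pi] at hU
    have hUz : (Polynomial.Chebyshev.U ℝ ((m:ℤ)-1)).eval (c k) = 0 := by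
      simp only [hcdef]
      rcases mul_eq_zero.mp hU with h | h
      · exact h
      · exact absurd h (ne_of_gt hsin)
    rw [Polynomial.Chebyshev.T_derivative_eq_U]
    simp [hUz]
  have hξnec : ∀ i, 1 ≤ i → i ≤ m → ξ ≠ c i := by
    intro i h1 h2
    rcases Nat.lt_or_ge i m with h | h
    · exact hext i h1 (by omega)
    · have : i = m := by omega
      subst this
      rw [hcm]
      exact ne_of_gt hξ.1
  have hdvd : (X - C ξ)^2 ∣ Q := by
    have h1 : (X - C ξ)^(Q.rootMultiplicity ξ) ∣ Q := Polynomial.pow_rootMultiplicity_dvd Q ξ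
    exact dvd_trans (pow_dvd_pow _ hmult) h1
  obtain ⟨Q₁, hfac⟩ := hdvd
  have hQ₁ne : Q₁ ≠ 0 := by
    intro h; rw [h, mul_zero] at hfac; exact hQne hfac
  have hQeval : ∀ x, Q.eval x = (x - ξ)^2 * Q₁.eval x := by
    intro x; rw [hfac]; simp
  have hsign : ∀ i, 1 ≤ i → i ≤ m → (-1:ℝ)^i * Q₁.eval (c i) ≤ 0 := by
    intro i h1 h2
    have hlow : (-1:ℝ) ≤ c i := by
      rcases eq_or_lt_of_le h2 with rfl | h
      · rw [hcm]
      · rw [← hcm]; exact (hanti i m h le_rfl).le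
    have hup : c i ≤ c 1 := by
      rcases eq_or_lt_of_le h1 with h | h
      · rw [← h]
      · exact (hanti 1 i h h2).le
    have hPb : |P.eval (c i)| ≤ 1 := hIcc _ ⟨hlow, hup⟩
    have hq : Q.eval (c i) = P.eval (c i) - (-1)^i := by
      simp [hQdef, hTval i]
    have hQs : (-1:ℝ)^i * Q.eval (c i) ≤ 0 := by
      rw [hq]
      have hsq : (-1:ℝ)^i * (-1)^i = 1 := by rw [← mul_pow]; norm_num
      have habs : (-1:ℝ)^i * P.eval (c i) ≤ 1 := by
        calc (-1:ℝ)^i * P.eval (c i) ≤ |(-1:ℝ)^i * P.eval (c i)| := le_abs_self _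
          _ = |P.eval (c i)| := by
              rw [abs_mul, abs_pow, abs_neg, abs_one, one_pow, one_mul]
          _ ≤ 1 := hPb
      rw [mul_sub, hsq]
      linarith
    have hpos : 0 < (c i - ξ)^2 := by
      have hne' : c i - ξ ≠ 0 := sub_ne_zero.mpr (Ne.symm (hξnec i h1 h2))
      exact lt_of_le_of_ne (sq_nonneg _) (Ne.symm (pow_ne_zero 2 hne'))
    rw [hQeval] at hQs
    nlinarith [hQs, hpos]
  have hdouble : ∀ k, 2 ≤ k → k ≤ m - 1 → Q₁.eval (c k) = 0 →
      2 ≤ Q₁.roots.count (c k) := by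
    intro k hk2 hkm hroot
    have hQroot : Q.eval (c k) = 0 := by rw [hQeval, hroot, mul_zero]
    have hPk : P.eval (c k) = (-1)^k := by
      have hq : Q.eval (c k) = P.eval (c k) - (-1)^k := by simp [hQdef, hTval k]
      rw [hQroot] at hq
      linarith
    have hin1 : (-1:ℝ) < c k := by
      have := hanti k m (by omega) le_rfl
      rwa [hcm] at this
    have hin2 : c k < c 1 := hanti 1 k (by omega) (by omega)
    have hnb : ∀ᶠ x in nhds (c k), |P.eval x| ≤ 1 :=
      Filter.eventually_of_mem (Ioo_mem_nhds hin1 hin2) (fun x hx => hIoo x hx)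
    have hderiv : (derivative P).eval (c k) = 0 := by
      rcases Nat.even_or_odd k with he | ho
      · have hmax : IsLocalMax (fun x => P.eval x) (c k) := by
          filter_upwards [hnb] with x hx
          have : P.eval x ≤ 1 := le_trans (le_abs_self _) hx
          simpa [hPk, he.neg_one_pow] using this
        have := hmax.deriv_eq_zero
        rwa [Polynomial.deriv] at this
      · have hmin : IsLocalMin (fun x => P.eval x) (c k) := by
          filter_upwards [hnb] with x hx
          have : -1 ≤ P.eval x := by
            have := neg_abs_le (P.eval x); linarith
          simpa [hPk, ho.neg_one_pow] using this
        have := hmin.deriv_eq_zero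
        rwa [Polynomial.deriv] at this
    have hQ' : (derivative Q).eval (c k) = 0 := by
      simp [hQdef, Polynomial.derivative_sub, hderiv, hT'0 k (by omega) hkm]
    have h2Q : 2 ≤ Q.rootMultiplicity (c k) :=
      (Polynomial.one_lt_rootMultiplicity_iff_isRoot hQne).mpr ⟨hQroot, hQ'⟩
    have hmulrel : Q.rootMultiplicity (c k) =
        ((X - C ξ)^2 : ℝ[X]).rootMultiplicity (c k) + Q₁.rootMultiplicity (c k) := by
      conv_lhs => rw [hfac]
      exact Polynomial.rootMultiplicity_mul (hfac ▸ hQne)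
    have hz0 : ((X - C ξ)^2 : ℝ[X]).rootMultiplicity (c k) = 0 := by
      apply Polynomial.rootMultiplicity_eq_zero
      intro hr
      have : ((c k) - ξ)^2 = 0 := by simpa using hr
      exact (pow_ne_zero 2 (sub_ne_zero.mpr (Ne.symm (hξnec k (by omega) (by omega))))) this
    rw [Polynomial.count_roots]
    omega
  have hivt : ∀ i : ℕ, ∃ zz : ℝ, 1 ≤ i → i ≤ m - 1 →
      (c (i+1) ≤ zz ∧ zz ≤ c i ∧ Q₁.eval zz = 0) := by
    intro i
    by_cases hi : 1 ≤ i ∧ i ≤ m - 1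
    · obtain ⟨h1, h2⟩ := hi
      have hab : c (i+1) ≤ c i := (hanti i (i+1) (by omega) (by omega)).le
      have hsi := hsign i h1 (by omega)
      have hsi1 := hsign (i+1) (by omega) (by omega)
      have hcont : ContinuousOn (fun x => Q₁.eval x) (Set.Icc (c (i+1)) (c i)) :=
        (Polynomial.continuous Q₁).continuousOn
      rcases Nat.even_or_odd i with he | ho
      · rw [he.neg_one_pow, one_mul] at hsi
        rw [(he.add_one).neg_one_pow] at hsi1
        have h1' : 0 ≤ Q₁.eval (c (i+1)) := by linarith
        have hm0' := intermediate_value_Icc' hab hcont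
          (Set.mem_Icc.mpr ⟨hsi, h1'⟩ : (0:ℝ) ∈ Set.Icc (Q₁.eval (c i)) (Q₁.eval (c (i+1))))
        obtain ⟨zz, hzz, hzz0⟩ := hm0'
        exact ⟨zz, fun _ _ => ⟨hzz.1, hzz.2, hzz0⟩⟩
      · rw [ho.neg_one_pow, neg_one_mul] at hsi
        rw [(Odd.add_one ho).neg_one_pow, one_mul] at hsi1
        have h0' : 0 ≤ Q₁.eval (c i) := by linarith
        have hm0' := intermediate_value_Icc hab hcont
          (Set.mem_Icc.mpr ⟨hsi1, h0'⟩ : (0:ℝ) ∈ Set.Icc (Q₁.eval (c (i+1))) (Q₁.eval (c i)))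
        obtain ⟨zz, hzz, hzz0⟩ := hm0'
        exact ⟨zz, fun _ _ => ⟨hzz.1, hzz.2, hzz0⟩⟩
    · exact ⟨0, fun ha hb => absurd ⟨ha, hb⟩ hi⟩
  choose z hzspec using hivt
  have hcount := count_lemma (m-1) z Q₁.roots
    (fun i h1 h2 => by
      rw [Polynomial.mem_roots']
      exact ⟨hQ₁ne, (hzspec i h1 h2).2.2⟩)
    (fun i h1 h2 heq => by
      have s1 := hzspec i h1 (by omega)
      have s2 := hzspec (i+1) (by omega) h2
      have hzc : z i = c (i+1) := le_antisymm (by rw [heq]; exact s2.2.1) s1.1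
      rw [hzc]
      exact hdouble (i+1) (by omega) h2 (hzc ▸ s1.2.2))
    (fun i j h1 h2 h3 => by
      have s1 := hzspec i h1 (by omega)
      have s2 := hzspec j (by omega) h3
      calc z j ≤ c j := s2.2.1
        _ ≤ c (i+2) := by
            rcases eq_or_lt_of_le h2 with h | h
            · rw [h]
            · exact (hanti (i+2) j h (by omega)).le
        _ < c (i+1) := hanti (i+1) (i+2) (by omega) (by omega)
        _ ≤ z i := s1.1)
  have hdegT : (Polynomial.Chebyshev.T ℝ (m:ℤ)).degree ≤ (m:ℕ) := by
    refine le_trans (Polynomial.degree_le_natDegree) ?_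
    exact_mod_cast chebT_natDegree_le m
  have hQd : Q.natDegree ≤ m :=
    Polynomial.natDegree_le_iff_degree_le.mpr
      (le_trans (Polynomial.degree_sub_le _ _) (max_le hdeg hdegT))
  have hfacd : Q.natDegree = 2 + Q₁.natDegree := by
    rw [hfac, Polynomial.natDegree_mul (pow_ne_zero 2 (Polynomial.X_sub_C_ne_zero ξ)) hQ₁ne,
      Polynomial.natDegree_pow, Polynomial.natDegree_X_sub_C]
  have hcard := Polynomial.card_roots' Q₁
  omega
end

section
/- For real h with 0 < h < π, let P(ε,h) = cos(h) − (hε/2)·sin(h). Then |P(ε,h)| ≤ 1 if and only if ε ∈ [α(h), β(h)], where α(h) = −(2/h)·tan(h/2) and β(h) = (2/h)·cot(h/2). Moreover α(h) < −1 and β(h) > 0 for all such h. -/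
open Real

theorem stmt_4 (h : ℝ) (hh : 0 < h ∧ h < π) :
    (∀ ε : ℝ,
      |Real.cos h - h * ε / 2 * Real.sin h| ≤ 1 ↔
        ε ∈ Set.Icc (-(2 / h) * Real.tan (h / 2))
          ((2 / h) * (Real.cos (h / 2) / Real.sin (h / 2)))) ∧
    -(2 / h) * Real.tan (h / 2) < -1 ∧
    0 < (2 / h) * (Real.cos (h / 2) / Real.sin (h / 2)) := by
  obtain ⟨h0, hπ⟩ := hh
  have hpi := Real.pi_pos
  have hs : 0 < Real.sin (h / 2) :=
    Real.sin_pos_of_pos_of_lt_pi (by linarith) (by linarith)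
  have hc : 0 < Real.cos (h / 2) :=
    Real.cos_pos_of_mem_Ioo ⟨by linarith, by linarith⟩
  have hcosh : Real.cos h = 2 * Real.cos (h / 2) ^ 2 - 1 := by
    have := Real.cos_two_mul (h / 2)
    rw [show 2 * (h / 2) = h by ring] at this
    linarith
  have hsinh : Real.sin h = 2 * Real.sin (h / 2) * Real.cos (h / 2) := by
    have := Real.sin_two_mul (h / 2)
    rw [show 2 * (h / 2) = h by ring] at this
    linarith
  have hpyth : Real.sin (h / 2) ^ 2 + Real.cos (h / 2) ^ 2 = 1 :=
    Real.sin_sq_add_cos_sq _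
  have htan : Real.tan (h / 2) = Real.sin (h / 2) / Real.cos (h / 2) :=
    Real.tan_eq_sin_div_cos _
  have halpha : -(2 / h) * Real.tan (h / 2)
      = -(2 * Real.sin (h / 2)) / (h * Real.cos (h / 2)) := by
    rw [htan]; field_simp
  have hbeta : (2 / h) * (Real.cos (h / 2) / Real.sin (h / 2))
      = (2 * Real.cos (h / 2)) / (h * Real.sin (h / 2)) := by
    field_simp
  have hhc : 0 < h * Real.cos (h / 2) := by positivity
  have hhs : 0 < h * Real.sin (h / 2) := by positivity
  refine ⟨fun ε => ?_, ?_, ?_⟩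
  · rw [abs_le, Set.mem_Icc, halpha, hbeta, div_le_iff₀ hhc, le_div_iff₀ hhs]
    constructor
    · rintro ⟨h1, h2⟩
      constructor
      · nlinarith [mul_pos hs hc, sq_nonneg (Real.sin (h / 2))]
      · nlinarith [mul_pos hs hc, sq_nonneg (Real.cos (h / 2))]
    · rintro ⟨h1, h2⟩
      constructor
      · nlinarith [mul_pos hs hc]
      · nlinarith [mul_pos hs hc]
  · have ht : h / 2 < Real.tan (h / 2) := Real.lt_tan (by linarith) (by linarith)
    rw [neg_mul, neg_lt_neg_iff]
    rw [show (2:ℝ) / h * Real.tan (h / 2) = Real.tan (h / 2) * 2 / h by ring,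
      lt_div_iff₀ h0]
    nlinarith
  · positivity
end

section
/- Let R = [[0,1],[−1,0]] and K = [[0,0],[−1,0]]. For any real coefficients r_1, ..., r_{m+1} with ∑ r_i = 1 and k_1, ..., k_m with ∑ k_i = 1, define M(ε,h) = exp(h r_{m+1} R)(I + ε h k_m K) exp(h r_m R) ⋯ (I + ε h k_1 K) exp(h r_1 R). Then for each fixed h, (1/2)·tr M(ε,h) = cos(h) − (εh/2)·sin(h) + O(ε²) as ε → 0; equivalently, the polynomial ε ↦ (1/2)tr M(ε,h) has constant coefficient cos(h) and linear coefficient −(h/2)sin(h). -/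
open Real Matrix Asymptotics

noncomputable def Rmat : Matrix (Fin 2) (Fin 2) ℝ := !![0, 1; -1, 0]

noncomputable def Kmat : Matrix (Fin 2) (Fin 2) ℝ := !![0, 0; -1, 0]

/-- `M(ε,h) = exp(h r_{m+1} R) (I + ε h k_m K) exp(h r_m R) ⋯ (I + ε h k_1 K) exp(h r_1 R)` -/
noncomputable def splitMat (m : ℕ) (r k : ℕ → ℝ) (ε h : ℝ) : Matrix (Fin 2) (Fin 2) ℝ :=
  NormedSpace.exp ((h * r (m + 1)) • Rmat) *
    (((List.range m).reverse.map fun i =>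
        (1 + (ε * h * k (i + 1)) • Kmat) *
          NormedSpace.exp ((h * r (i + 1)) • Rmat)).prod)

namespace Stmt10Aux

attribute [local instance] Matrix.linftyOpNormedRing Matrix.linftyOpNormedAlgebra

abbrev Mat := Matrix (Fin 2) (Fin 2) ℝ

lemma R_sq : Rmat * Rmat = -1 := by
  ext i j
  fin_cases i <;> fin_cases j <;>
    simp [Rmat, Matrix.mul_apply, Fin.sum_univ_two, Matrix.one_apply]

/-- The ring hom `ℂ →+* Mat`, `a + b i ↦ a • 1 + b • R`. -/
noncomputable def φ : ℂ →+* Mat where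
  toFun z := z.re • (1 : Mat) + z.im • Rmat
  map_one' := by simp
  map_mul' z w := by
    symm
    simp only [Complex.mul_re, Complex.mul_im, add_mul, mul_add, smul_mul_assoc,
      mul_smul_comm, smul_smul, one_mul, mul_one, R_sq, smul_neg, sub_smul, add_smul]
    module
  map_zero' := by simp
  map_add' z w := by
    simp only [Complex.add_re, Complex.add_im, add_smul]
    abel

lemma φ_continuous : Continuous φ := by
  have : Continuous fun z : ℂ => z.re • (1 : Mat) + z.im • Rmat := by
    fun_prop
  exact this

lemma exp_R (t : ℝ) :
    NormedSpace.exp (t • Rmat) = Real.cos t • (1 : Mat) + Real.sin t • Rmat := by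
  have h1 : t • Rmat = φ ((t : ℂ) * Complex.I) := by
    simp [φ, RingHom.coe_mk, MonoidHom.coe_mk, OneHom.coe_mk]
  rw [h1]
  erw [← NormedSpace.map_exp (φ : ℂ →+* Mat) φ_continuous,
    ← Complex.exp_eq_exp_ℂ]
  simp [φ, Complex.exp_ofReal_mul_I_re, Complex.exp_ofReal_mul_I_im]

noncomputable def E (t : ℝ) : Mat := NormedSpace.exp (t • Rmat)

lemma E_mul (a b : ℝ) : E a * E b = E (a + b) := by
  unfold E
  rw [add_smul, Matrix.exp_add_of_commute]
  exact ((Commute.refl Rmat).smul_left a).smul_right b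

lemma trace_E (t : ℝ) : Matrix.trace (E t) = 2 * Real.cos t := by
  rw [E, exp_R]
  simp [Rmat, Matrix.trace_fin_two]
  ring

lemma trace_K_E (t : ℝ) : Matrix.trace (Kmat * E t) = -Real.sin t := by
  rw [E, exp_R]
  simp only [mul_add, Matrix.mul_smul]
  rw [Matrix.trace_add, Matrix.trace_smul, Matrix.trace_smul]
  have h1 : Matrix.trace (Kmat * (1 : Mat)) = 0 := by
    simp [Kmat, Matrix.trace_fin_two]
  have h2 : Matrix.trace (Kmat * Rmat) = -1 := by
    simp [Kmat, Rmat, Matrix.trace_fin_two, Matrix.mul_apply, Fin.sum_univ_two]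
  rw [h1, h2]
  simp

/-- First-order coefficient matrix of a product of affine factors. -/
noncomputable def Bl : List (Mat × Mat) → Mat
  | [] => 0
  | p :: t => p.1 * Bl t + p.2 * ((t.map Prod.fst).prod)

lemma eps_sq_bigO : (fun ε : ℝ => ε ^ 2) =O[nhds 0] fun ε : ℝ => ε := by
  apply IsBigO.of_bound 1
  filter_upwards [Metric.ball_mem_nhds (0 : ℝ) one_pos] with ε hε
  simp only [Real.norm_eq_abs, one_mul, pow_two, abs_mul]
  have : |ε| < 1 := by simpa [Real.dist_eq] using hε
  nlinarith [abs_nonneg ε]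

lemma prod_expansion (l : List (Mat × Mat)) :
    (fun ε : ℝ => (l.map fun p => p.1 + ε • p.2).prod
        - (l.map Prod.fst).prod - ε • Bl l) =O[nhds 0] fun ε : ℝ => ε ^ 2 := by
  induction l with
  | nil =>
      simp only [List.map_nil, List.prod_nil, Bl, smul_zero, sub_self, sub_zero]
      exact isBigO_zero _ _
  | cons p t ih =>
      have hPt : (fun ε : ℝ => ((t.map fun p => p.1 + ε • p.2).prod
          - (t.map Prod.fst).prod)) =O[nhds 0] fun ε : ℝ => ε := by
        have h1 : (fun ε : ℝ => ε • Bl t) =O[nhds 0] fun ε : ℝ => ε := by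
          have := (isBigO_refl (fun ε : ℝ => ε) (nhds 0)).smul
            (isBigO_const_const (Bl t) (c' := (1:ℝ)) one_ne_zero (nhds 0))
          simpa using this
        have h2 := ih.trans eps_sq_bigO
        have := h1.add h2
        apply this.congr_left
        intro ε; abel
      have key : ∀ ε : ℝ,
          ((p :: t).map fun q => q.1 + ε • q.2).prod
            - ((p :: t).map Prod.fst).prod - ε • Bl (p :: t)
          = p.1 * ((t.map fun q => q.1 + ε • q.2).prod
              - (t.map Prod.fst).prod - ε • Bl t)
            + ε • (p.2 * ((t.map fun q => q.1 + ε • q.2).prod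
                - (t.map Prod.fst).prod)) := by
        intro ε
        simp only [List.map_cons, List.prod_cons, Bl]
        simp only [add_mul, smul_mul_assoc, mul_sub, mul_add, Matrix.mul_smul,
          smul_sub, smul_add]
        abel
      have h1 : (fun ε : ℝ => p.1 * ((t.map fun q => q.1 + ε • q.2).prod
          - (t.map Prod.fst).prod - ε • Bl t)) =O[nhds 0] fun ε : ℝ => ε ^ 2 :=
        ih.const_mul_left p.1
      have h2 : (fun ε : ℝ => ε • (p.2 * ((t.map fun q => q.1 + ε • q.2).prod
          - (t.map Prod.fst).prod))) =O[nhds 0] fun ε : ℝ => ε ^ 2 := by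
        have := (isBigO_refl (fun ε : ℝ => ε) (nhds 0)).smul
          ((hPt.const_mul_left p.2 : _))
        apply this.congr_right
        intro ε; simp [pow_two, smul_eq_mul]
      exact ((h1.add h2).congr_left fun ε => (key ε).symm)

lemma E_zero : E 0 = 1 := by
  simp [E, NormedSpace.exp_zero]

lemma range_rev_succ {α : Type*} (f : ℕ → α) (n : ℕ) :
    (List.range (n + 1)).reverse.map f = f n :: ((List.range n).reverse.map f) := by
  rw [List.range_succ, List.reverse_append]
  simp

lemma prod_G (h : ℝ) (r : ℕ → ℝ) (n : ℕ) :
    (((List.range n).reverse.map fun i => E (h * r (i + 1))).prod)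
      = E (h * ∑ i ∈ Finset.range n, r (i + 1)) := by
  induction n with
  | zero => simp [E_zero]
  | succ n ih =>
      rw [range_rev_succ, List.prod_cons, ih, E_mul, Finset.sum_range_succ]
      exact congrArg E (by ring)

/-- The list of (zeroth order, first order) factors. -/
noncomputable def L (h : ℝ) (r k : ℕ → ℝ) (n : ℕ) : List (Mat × Mat) :=
  (List.range n).reverse.map fun i =>
    (E (h * r (i + 1)), (h * k (i + 1)) • (Kmat * E (h * r (i + 1))))

lemma L_fst (h : ℝ) (r k : ℕ → ℝ) (n : ℕ) :
    ((L h r k n).map Prod.fst).prod = E (h * ∑ i ∈ Finset.range n, r (i + 1)) := by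
  rw [L, List.map_map, ← prod_G h r n]
  rfl

lemma trace_Bl (h : ℝ) (r k : ℕ → ℝ) (n : ℕ) (t : ℝ) :
    Matrix.trace (E t * Bl (L h r k n))
      = (h * ∑ i ∈ Finset.range n, k (i + 1)) *
          (-Real.sin (t + h * ∑ i ∈ Finset.range n, r (i + 1))) := by
  induction n generalizing t with
  | zero => simp [L, Bl]
  | succ n ih =>
      rw [L, range_rev_succ]
      rw [show ((List.range n).reverse.map fun i =>
          (E (h * r (i + 1)), (h * k (i + 1)) • (Kmat * E (h * r (i + 1))))) = L h r k n from rfl]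
      rw [Bl]
      simp only [mul_add, Matrix.trace_add]
      have h1 : Matrix.trace (E t * (E (h * r (n + 1)) * Bl (L h r k n)))
          = (h * ∑ i ∈ Finset.range n, k (i + 1)) *
              (-Real.sin (t + h * r (n + 1) + h * ∑ i ∈ Finset.range n, r (i + 1))) := by
        rw [← mul_assoc, E_mul, ih]
      have h2 : Matrix.trace (E t *
            ((h * k (n + 1)) • (Kmat * E (h * r (n + 1))) * ((L h r k n).map Prod.fst).prod))
          = (h * k (n + 1)) *
              (-Real.sin (t + h * r (n + 1) + h * ∑ i ∈ Finset.range n, r (i + 1))) := by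
        rw [L_fst, smul_mul_assoc, mul_assoc, mul_assoc, E_mul]
        rw [Matrix.mul_smul, Matrix.trace_smul, Matrix.trace_mul_comm, mul_assoc, E_mul,
          trace_K_E]
        rw [smul_eq_mul, show h * r (n + 1) + h * ∑ i ∈ Finset.range n, r (i + 1) + t
          = t + h * r (n + 1) + h * ∑ i ∈ Finset.range n, r (i + 1) from by ring]
        ring
      rw [h1, h2, Finset.sum_range_succ, Finset.sum_range_succ,
        show t + h * (∑ i ∈ Finset.range n, r (i + 1) + r (n + 1))
          = t + h * r (n + 1) + h * ∑ i ∈ Finset.range n, r (i + 1) from by ring]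
      ring

lemma abs_trace_le (Y : Mat) : |Matrix.trace Y| ≤ 2 * ‖Y‖ := by
  have hij : ∀ i j : Fin 2, |Y i j| ≤ ‖Y‖ := by
    intro i j
    have h1 : ‖Y i j‖₊ ≤ ‖Y‖₊ := by
      rw [Matrix.linfty_opNNNorm_def]
      exact le_trans (Finset.single_le_sum (f := fun j => ‖Y i j‖₊)
        (fun _ _ => zero_le) (Finset.mem_univ j)) (Finset.le_sup (f := fun i => ∑ j, ‖Y i j‖₊) (Finset.mem_univ i))
    have h2 : ‖Y i j‖ ≤ ‖Y‖ := by exact_mod_cast h1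
    simpa [Real.norm_eq_abs] using h2
  rw [Matrix.trace_fin_two]
  calc |Y 0 0 + Y 1 1| ≤ |Y 0 0| + |Y 1 1| := abs_add_le _ _
  _ ≤ ‖Y‖ + ‖Y‖ := add_le_add (hij 0 0) (hij 1 1)
  _ = 2 * ‖Y‖ := by ring

lemma main (m : ℕ) (hm : 1 ≤ m) (r k : ℕ → ℝ)
    (hr : ∑ i ∈ Finset.Icc 1 (m + 1), r i = 1)
    (hk : ∑ i ∈ Finset.Icc 1 m, k i = 1) (h : ℝ) :
    (fun ε : ℝ =>
        (1 / 2) * Matrix.trace (splitMat m r k ε h) -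
          (Real.cos h - ε * h / 2 * Real.sin h)) =O[nhds 0]
      fun ε : ℝ => ε ^ 2 := by
  classical
  set C : Mat := E (h * r (m + 1)) with hC
  set A : Mat := ((L h r k m).map Prod.fst).prod with hA
  set B : Mat := Bl (L h r k m) with hB
  -- rewrite splitMat as C * (affine product)
  have hsplit : ∀ ε : ℝ, splitMat m r k ε h
      = C * ((L h r k m).map fun p => p.1 + ε • p.2).prod := by
    intro ε
    have hfun : (fun i => (1 + (ε * h * k (i + 1)) • Kmat) *
          NormedSpace.exp ((h * r (i + 1)) • Rmat))
        = ((fun p : Mat × Mat => p.1 + ε • p.2) ∘ fun i =>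
            (E (h * r (i + 1)), (h * k (i + 1)) • (Kmat * E (h * r (i + 1))))) := by
      funext i
      show (1 + (ε * h * k (i + 1)) • Kmat) * NormedSpace.exp ((h * r (i + 1)) • Rmat)
          = E (h * r (i + 1)) + ε • ((h * k (i + 1)) • (Kmat * E (h * r (i + 1))))
      rw [add_mul, one_mul, smul_mul_assoc, smul_smul, ← mul_assoc]
      rfl
    rw [splitMat, L, List.map_map, ← hfun]
    rfl
  -- sums
  have hsr : ∑ i ∈ Finset.range m, r (i + 1) = ∑ i ∈ Finset.Icc 1 m, r i := by
    rw [← Finset.Ico_add_one_right_eq_Icc, Finset.sum_Ico_eq_sum_range]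
    simp [add_comm]
  have hsk : ∑ i ∈ Finset.range m, k (i + 1) = 1 := by
    rw [← hk, ← Finset.Ico_add_one_right_eq_Icc, Finset.sum_Ico_eq_sum_range]
    simp [add_comm]
  have hrtot : h * r (m + 1) + h * ∑ i ∈ Finset.range m, r (i + 1) = h := by
    have := Finset.sum_Icc_succ_top (a := 1) (b := m) (by omega) r
    rw [this] at hr
    rw [hsr, ← mul_add,
      show r (m + 1) + ∑ i ∈ Finset.Icc 1 m, r i = 1 from by linarith, mul_one]
  -- trace values
  have htraceA : Matrix.trace (C * A) = 2 * Real.cos h := by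
    rw [hA, L_fst, hC, E_mul, hrtot, trace_E]
  have htraceB : Matrix.trace (C * B) = -(h * Real.sin h) := by
    rw [hB, hC, trace_Bl, hsk]
    rw [hrtot]
    ring
  -- the linear functional X ↦ (1/2) * trace (C * X)
  set F : Mat →ₗ[ℝ] ℝ :=
    (1 / 2 : ℝ) • ((Matrix.traceLinearMap (Fin 2) ℝ ℝ).comp (LinearMap.mulLeft ℝ C)) with hF
  have hFapply : ∀ X : Mat, F X = (1 / 2) * Matrix.trace (C * X) := by
    intro X; simp [hF, LinearMap.mulLeft_apply]
  have hmain : ∀ ε : ℝ,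
      (1 / 2) * Matrix.trace (splitMat m r k ε h) -
          (Real.cos h - ε * h / 2 * Real.sin h)
        = F (((L h r k m).map fun p => p.1 + ε • p.2).prod - A - ε • B) := by
    intro ε
    rw [hsplit ε]
    rw [map_sub, map_sub, _root_.map_smul, hFapply, hFapply, hFapply, htraceA, htraceB]
    simp only [smul_eq_mul]
    ring
  have hO := prod_expansion (L h r k m)
  have hFO : (fun ε : ℝ =>
      F (((L h r k m).map fun p => p.1 + ε • p.2).prod - A - ε • B)) =O[nhds 0]
      fun ε : ℝ => ((L h r k m).map fun p => p.1 + ε • p.2).prod - A - ε • B := by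
    apply IsBigO.of_bound ‖C‖
    apply Filter.Eventually.of_forall
    intro ε
    set X : Mat := ((L h r k m).map fun p => p.1 + ε • p.2).prod - A - ε • B with hX
    have h1 : |F X| ≤ ‖C * X‖ := by
      rw [hFapply]
      have ht := abs_trace_le (C * X)
      rw [abs_mul, show |(1:ℝ)/2| = 1/2 from by norm_num]
      linarith
    have h2 : ‖C * X‖ ≤ ‖C‖ * ‖X‖ := norm_mul_le _ _
    calc ‖F X‖ = |F X| := rfl
    _ ≤ ‖C‖ * ‖X‖ := le_trans h1 h2
  exact ((hFO.trans hO).congr_left fun ε => (hmain ε).symm)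

end Stmt10Aux

open Stmt10Aux in
theorem stmt_10 (m : ℕ) (hm : 1 ≤ m) (r k : ℕ → ℝ)
    (hr : ∑ i ∈ Finset.Icc 1 (m + 1), r i = 1)
    (hk : ∑ i ∈ Finset.Icc 1 m, k i = 1) (h : ℝ) :
    (fun ε : ℝ =>
        (1 / 2) * Matrix.trace (splitMat m r k ε h) -
          (Real.cos h - ε * h / 2 * Real.sin h)) =O[nhds 0]
      fun ε : ℝ => ε ^ 2 := by
  exact Stmt10Aux.main m hm r k hr hk h
end

section
/- For each integer m ≥ 2, the equation (mh/2)·sin(h/m) = cos(π/m) − cos(h/m) has a smallest positive root h_m, and h_m < mπ. For m = 1 the smallest positive root of this equation is h_1 = π. -/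
open Real

theorem stmt_15 :
    (∀ m : ℕ, 2 ≤ m →
      ∃ hm : ℝ,
        IsLeast {h : ℝ | 0 < h ∧
            m * h / 2 * Real.sin (h / m) = Real.cos (π / m) - Real.cos (h / m)} hm ∧
        hm < m * π) ∧
    IsLeast {h : ℝ | 0 < h ∧
        1 * h / 2 * Real.sin (h / 1) = Real.cos (π / 1) - Real.cos (h / 1)} π := by
  constructor
  · intro m hm
    have hmpos : (0:ℝ) < m := by
      have : (2:ℝ) ≤ m := by exact_mod_cast hm
      linarith
    have hm0 : (m:ℝ) ≠ 0 := ne_of_gt hmpos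
    set f : ℝ → ℝ := fun h =>
      m * h / 2 * Real.sin (h / m) - (Real.cos (π / m) - Real.cos (h / m)) with hfdef
    have hcont : Continuous f := by
      apply Continuous.sub
      · exact (continuous_const.mul continuous_id |>.div_const 2).mul
          (Real.continuous_sin.comp (continuous_id.div_const (m:ℝ)))
      · exact continuous_const.sub (Real.continuous_cos.comp (continuous_id.div_const (m:ℝ)))
    have h2m : (2:ℝ) ≤ m := by exact_mod_cast hm
    have hdivpos : 0 < π / m := by positivity
    have hdivle : π / m ≤ π / 2 :=
      div_le_div_of_nonneg_left Real.pi_pos.le two_pos h2m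
    have hcoslt : Real.cos (π / m) < 1 := by
      have := Real.cos_lt_cos_of_nonneg_of_le_pi le_rfl
        (by linarith [Real.pi_pos] : π / m ≤ π) hdivpos
      simpa using this
    have hcosnn : 0 ≤ Real.cos (π / m) :=
      Real.cos_nonneg_of_mem_Icc ⟨by linarith, hdivle⟩
    have hf0 : 0 < f 0 := by
      have : f 0 = 1 - Real.cos (π / m) := by simp [hfdef]
      rw [this]; linarith
    have hfm : f ((m:ℝ) * π) < 0 := by
      have h1 : (m:ℝ) * π / m = π := by field_simp
      have : f ((m:ℝ) * π) = -(Real.cos (π / m) + 1) := by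
        simp only [hfdef, h1, Real.sin_pi, Real.cos_pi, mul_zero]
        ring
      rw [this]; linarith
    have hmp : (0:ℝ) < (m:ℝ) * π := by positivity
    obtain ⟨x, hx, hfx⟩ : ∃ x ∈ Set.Ioo (0:ℝ) ((m:ℝ)*π), f x = 0 := by
      have h2 := intermediate_value_Ioo' (le_of_lt hmp) hcont.continuousOn
      have h0mem : (0:ℝ) ∈ Set.Ioo (f ((m:ℝ)*π)) (f 0) := ⟨hfm, hf0⟩
      obtain ⟨x, hx, hfx⟩ := h2 h0mem
      exact ⟨x, hx, hfx⟩
    set T : Set ℝ := Set.Ici 0 ∩ f ⁻¹' {0} with hTdef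
    have hTclosed : IsClosed T := isClosed_Ici.inter (isClosed_singleton.preimage hcont)
    have hTne : T.Nonempty := ⟨x, le_of_lt hx.1, hfx⟩
    have hTbdd : BddBelow T := ⟨0, fun y hy => hy.1⟩
    have hcmem : sInf T ∈ T := hTclosed.csInf_mem hTne hTbdd
    have hcval : f (sInf T) = 0 := hcmem.2
    have hcpos : 0 < sInf T := by
      rcases lt_or_eq_of_le (Set.mem_Ici.mp hcmem.1) with h | h
      · exact h
      · exfalso
        rw [← h] at hcval
        linarith
    refine ⟨sInf T, ⟨⟨hcpos, ?_⟩, fun y hy => csInf_le hTbdd ⟨le_of_lt hy.1, ?_⟩⟩, ?_⟩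
    · simp only [hfdef] at hcval
      linarith
    · simp only [Set.mem_preimage, Set.mem_singleton_iff, hfdef]
      have := hy.2
      linarith
    · calc sInf T ≤ x := csInf_le hTbdd ⟨le_of_lt hx.1, hfx⟩
        _ < (m:ℝ) * π := hx.2
  · constructor
    · refine ⟨Real.pi_pos, ?_⟩
      simp
    · intro y hy
      obtain ⟨hy0, heq⟩ := hy
      by_contra hlt
      push_neg at hlt
      have hsin : 0 < Real.sin y := Real.sin_pos_of_pos_of_lt_pi hy0 hlt
      have hcos : -1 ≤ Real.cos y := Real.neg_one_le_cos y
      simp only [one_mul, div_one, Real.cos_pi] at heq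
      nlinarith
end

section
/- Let m be a positive even integer, θ_1, ..., θ_m real numbers, and k_1, ..., k_m real numbers satisfying the palindromic conditions k_{m+1−j} = k_j and θ_i − θ_{m+1−j} = θ_i + θ_j − 1 for all i, j, together with ∑_{i=1}^{m/2} k_i = 1/2. Then for every positive integer n, S = ∑_{i=1}^m ∑_{j=1}^m k_i k_j sin²(nπ(θ_i − θ_j)) satisfies S ≤ 1/2. -/
open Real Finset

theorem stmt_16 (m : ℕ) (hm : 0 < m) (hme : Even m)
    (θ k : ℕ → ℝ)
    (hkpal : ∀ j ∈ Finset.Icc 1 m, k (m + 1 - j) = k j)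
    (hθpal : ∀ i ∈ Finset.Icc 1 m, ∀ j ∈ Finset.Icc 1 m,
        θ i - θ (m + 1 - j) = θ i + θ j - 1)
    (hksum : ∑ i ∈ Finset.Icc 1 (m / 2), k i = 1 / 2)
    (n : ℕ) (hn : 0 < n) :
    ∑ i ∈ Finset.Icc 1 m, ∑ j ∈ Finset.Icc 1 m,
        k i * k j * Real.sin (n * π * (θ i - θ j)) ^ 2 ≤ 1 / 2 := by
  have hmem : ∀ j ∈ Finset.Icc 1 m, m + 1 - j ∈ Finset.Icc 1 m := by
    intro j hj; simp only [Finset.mem_Icc] at *; omega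
  -- reindexing lemma
  have hre : ∀ f : ℕ → ℝ, ∑ j ∈ Finset.Icc 1 m, f j
      = ∑ j ∈ Finset.Icc 1 m, f (m + 1 - j) := by
    intro f
    refine Finset.sum_nbij' (fun j => m + 1 - j) (fun j => m + 1 - j) hmem hmem ?_ ?_ ?_
    · intro a ha; simp only [Finset.mem_Icc] at ha
      show m + 1 - (m + 1 - a) = a; omega
    · intro a ha; simp only [Finset.mem_Icc] at ha
      show m + 1 - (m + 1 - a) = a; omega
    · intro a ha; simp only [Finset.mem_Icc] at ha
      show f a = f (m + 1 - (m + 1 - a)); congr 1; omega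
  -- sin is π-antiperiodic, so sin² is π-periodic
  have hsin : ∀ x : ℝ, Real.sin (x - n * π) ^ 2 = Real.sin x ^ 2 := by
    intro x
    have h0 : Real.sin ((n : ℝ) * π) = 0 := Real.sin_nat_mul_pi n
    have h1 : Real.cos ((n : ℝ) * π) ^ 2 = 1 := by
      have := Real.sin_sq_add_cos_sq ((n : ℝ) * π)
      rw [h0] at this; nlinarith
    rw [Real.sin_sub, h0, mul_zero, sub_zero, mul_pow, h1, mul_one]
  -- key trig identity
  have hid : ∀ a b : ℝ, Real.sin (a - b) ^ 2 + Real.sin (a + b) ^ 2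
      = 1 - Real.cos (2 * a) * Real.cos (2 * b) := by
    intro a b
    rw [Real.sin_sq (a - b), Real.sin_sq (a + b), Real.cos_sq (a - b), Real.cos_sq (a + b),
      show 2 * (a - b) = 2 * a - 2 * b from by ring,
      show 2 * (a + b) = 2 * a + 2 * b from by ring, Real.cos_sub, Real.cos_add]
    ring
  -- sum of weights is 1
  have hK : ∑ i ∈ Finset.Icc 1 m, k i = 1 := by
    obtain ⟨t, ht⟩ := hme
    have h2 : m / 2 = t := by omega
    have hIcc : Finset.Icc 1 m = Finset.Ioc 0 m := by
      ext x; simp [Finset.mem_Icc, Finset.mem_Ioc]; omega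
    have hIcc2 : Finset.Icc 1 (m / 2) = Finset.Ioc 0 t := by
      ext x; simp [Finset.mem_Icc, Finset.mem_Ioc]; omega
    have hsplit : (∑ i ∈ Finset.Ioc 0 t, k i) + ∑ i ∈ Finset.Ioc t m, k i
        = ∑ i ∈ Finset.Ioc 0 m, k i :=
      Finset.sum_Ioc_consecutive k (by omega) (by omega)
    have h2nd : ∑ i ∈ Finset.Ioc t m, k i = ∑ i ∈ Finset.Ioc 0 t, k i := by
      refine Finset.sum_nbij' (fun j => m + 1 - j) (fun j => m + 1 - j) ?_ ?_ ?_ ?_ ?_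
      · intro a ha; simp only [Finset.mem_Ioc] at *; omega
      · intro a ha; simp only [Finset.mem_Ioc] at *; omega
      · intro a ha; simp only [Finset.mem_Ioc] at ha
        show m + 1 - (m + 1 - a) = a; omega
      · intro a ha; simp only [Finset.mem_Ioc] at ha
        show m + 1 - (m + 1 - a) = a; omega
      · intro a ha; simp only [Finset.mem_Ioc] at ha
        exact (hkpal a (Finset.mem_Icc.mpr ⟨by omega, by omega⟩)).symm
    rw [hIcc, ← hsplit, h2nd]
    rw [hIcc2] at hksum
    linarith
  -- the reindexed form of the sum
  have step1 : ∑ i ∈ Finset.Icc 1 m, ∑ j ∈ Finset.Icc 1 m,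
        k i * k j * Real.sin (n * π * (θ i - θ j)) ^ 2
      = ∑ i ∈ Finset.Icc 1 m, ∑ j ∈ Finset.Icc 1 m,
        k i * k j * Real.sin (n * π * (θ i + θ j - 1)) ^ 2 := by
    refine Finset.sum_congr rfl fun i hi => ?_
    rw [hre (fun j => k i * k j * Real.sin (n * π * (θ i - θ j)) ^ 2)]
    refine Finset.sum_congr rfl fun j hj => ?_
    show k i * k (m + 1 - j) * Real.sin (n * π * (θ i - θ (m + 1 - j))) ^ 2 = _
    rw [hkpal j hj, hθpal i hi j hj]
  have step2 : ∀ i j : ℕ,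
      Real.sin (n * π * (θ i - θ j)) ^ 2 + Real.sin (n * π * (θ i + θ j - 1)) ^ 2
      = 1 - Real.cos (2 * (n * π * θ i)) * Real.cos (2 * (n * π * θ j)) := by
    intro i j
    rw [show (n : ℝ) * π * (θ i + θ j - 1) = (n * π * θ i + n * π * θ j) - n * π from by ring,
      hsin, show (n : ℝ) * π * (θ i - θ j) = n * π * θ i - n * π * θ j from by ring]
    exact hid _ _
  set C := ∑ i ∈ Finset.Icc 1 m, k i * Real.cos (2 * (n * π * θ i)) with hC
  have main : (∑ i ∈ Finset.Icc 1 m, ∑ j ∈ Finset.Icc 1 m,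
        k i * k j * Real.sin (n * π * (θ i - θ j)) ^ 2) * 2 = 1 - C ^ 2 := by
    have comb : (∑ i ∈ Finset.Icc 1 m, ∑ j ∈ Finset.Icc 1 m,
          k i * k j * Real.sin (n * π * (θ i - θ j)) ^ 2)
        + (∑ i ∈ Finset.Icc 1 m, ∑ j ∈ Finset.Icc 1 m,
          k i * k j * Real.sin (n * π * (θ i + θ j - 1)) ^ 2)
        = ∑ i ∈ Finset.Icc 1 m, ∑ j ∈ Finset.Icc 1 m,
          (k i * k j - (k i * Real.cos (2 * (n * π * θ i)))
            * (k j * Real.cos (2 * (n * π * θ j)))) := by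
      rw [← Finset.sum_add_distrib]
      refine Finset.sum_congr rfl fun i _ => ?_
      rw [← Finset.sum_add_distrib]
      refine Finset.sum_congr rfl fun j _ => ?_
      have := step2 i j
      rw [← mul_add, this]; ring
    have esplit : ∑ i ∈ Finset.Icc 1 m, ∑ j ∈ Finset.Icc 1 m,
          (k i * k j - (k i * Real.cos (2 * (n * π * θ i)))
            * (k j * Real.cos (2 * (n * π * θ j))))
        = (∑ i ∈ Finset.Icc 1 m, k i) ^ 2 - C ^ 2 := by
      rw [hC, sq, sq, Finset.sum_mul_sum, Finset.sum_mul_sum, ← Finset.sum_sub_distrib]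
      exact Finset.sum_congr rfl fun i _ => Finset.sum_sub_distrib _ _
    calc (∑ i ∈ Finset.Icc 1 m, ∑ j ∈ Finset.Icc 1 m,
          k i * k j * Real.sin (n * π * (θ i - θ j)) ^ 2) * 2
        = (∑ i ∈ Finset.Icc 1 m, ∑ j ∈ Finset.Icc 1 m,
            k i * k j * Real.sin (n * π * (θ i - θ j)) ^ 2)
          + (∑ i ∈ Finset.Icc 1 m, ∑ j ∈ Finset.Icc 1 m,
            k i * k j * Real.sin (n * π * (θ i + θ j - 1)) ^ 2) := by
          rw [← step1]; ring
      _ = (∑ i ∈ Finset.Icc 1 m, k i) ^ 2 - C ^ 2 := by rw [comb, esplit]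
      _ = 1 - C ^ 2 := by rw [hK]; ring
  nlinarith [sq_nonneg C]
end
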